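/- There exists a real constant c ≥ (1/2)·log a and an integer N such that for all n ≥ N, P[ |â_ML(U₁ⁿ) − a| ≥ √( (log log n)/n ) ] ≤ 2·exp(−c·n). -/

import Mathlib

open MeasureTheory ProbabilityTheory Finset Real
open scoped NNReal ENNReal

/-- The maximum-likelihood estimate `â_ML(u₁ⁿ) = (Σ_{i=1}^{n−1} uᵢu_{i+1}) / (Σ_{i=1}^{n−1} uᵢ²)`. -/
noncomputable def aML {Ω : Type*} (U : ℕ → Ω → ℝ) (n : ℕ) (ω : Ω) : ℝ :=
  (∑ i ∈ Finset.Icc 1 (n - 1), U i ω * U (i + 1) ω)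
    / (∑ i ∈ Finset.Icc 1 (n - 1), (U i ω) ^ 2)

lemma pdf_sq_le (v : ℝ≥0) (hv : v ≠ 0) (x : ℝ) :
    gaussianPDFReal 0 v x * x ^ 2 ≤ 4 * Real.sqrt 2 * v * gaussianPDFReal 0 (2 * v) x := by
  have hv0 : (0:ℝ) < v := by positivity
  have hx : x ^ 2 ≤ 4 * v * Real.exp (x ^ 2 / (4 * v)) := by
    have h1 : x ^ 2 / (4 * v) ≤ Real.exp (x ^ 2 / (4 * v)) := by
      have := Real.add_one_le_exp (x ^ 2 / (4 * v)); linarith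
    rw [div_le_iff₀ (by positivity)] at h1
    linarith [h1]
  have hpi : (0:ℝ) < 2 * Real.pi * v := by positivity
  simp only [gaussianPDFReal, sub_zero]
  have hco : ((2 * v : ℝ≥0) : ℝ) = 2 * (v:ℝ) := by push_cast; ring
  rw [hco]
  have hsqrt : Real.sqrt (2 * Real.pi * (2 * (v:ℝ))) = Real.sqrt 2 * Real.sqrt (2 * Real.pi * v) := by
    rw [← Real.sqrt_mul (by norm_num)]
    ring_nf
  rw [hsqrt]
  have hexp : Real.exp (-x ^ 2 / (2 * (v:ℝ))) * (4 * v * Real.exp (x ^ 2 / (4 * v)))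
      = 4 * v * Real.exp (-x ^ 2 / (2 * (2 * (v:ℝ)))) := by
    rw [mul_comm, mul_assoc, ← Real.exp_add]
    congr 2
    field_simp
    ring
  calc (Real.sqrt (2 * Real.pi * v))⁻¹ * Real.exp (-x ^ 2 / (2 * v)) * x ^ 2
      ≤ (Real.sqrt (2 * Real.pi * v))⁻¹ * (Real.exp (-x ^ 2 / (2 * v)) * (4 * v * Real.exp (x ^ 2 / (4 * v)))) := by
        rw [mul_assoc]
        apply mul_le_mul_of_nonneg_left _ (by positivity)
        apply mul_le_mul_of_nonneg_left hx (Real.exp_pos _).le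
    _ = 4 * Real.sqrt 2 * v * ((Real.sqrt 2 * Real.sqrt (2 * Real.pi * v))⁻¹ * Real.exp (-x ^ 2 / (2 * (2 * (v:ℝ))))) := by
        rw [hexp, mul_inv]
        have h2 : (0:ℝ) < Real.sqrt 2 := by positivity
        field_simp

lemma lintegral_sq_gaussian_le (v : ℝ≥0) (hv : v ≠ 0) :
    ∫⁻ x, ENNReal.ofReal (x ^ 2) ∂(gaussianReal 0 v) ≤ ENNReal.ofReal (4 * Real.sqrt 2 * v) := by
  rw [gaussianReal_of_var_ne_zero _ hv,
    lintegral_withDensity_eq_lintegral_mul _ (measurable_gaussianPDF 0 v)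
      ((by fun_prop : Measurable fun x : ℝ => x ^ 2).ennreal_ofReal)]
  have hb : ∀ x : ℝ, (gaussianPDF 0 v * fun x => ENNReal.ofReal (x ^ 2)) x
      ≤ ENNReal.ofReal (4 * Real.sqrt 2 * v) * gaussianPDF 0 (2 * v) x := by
    intro x
    simp only [Pi.mul_apply, gaussianPDF]
    rw [← ENNReal.ofReal_mul (gaussianPDFReal_nonneg _ _ _), ← ENNReal.ofReal_mul (by positivity)]
    exact ENNReal.ofReal_le_ofReal (pdf_sq_le v hv x)
  calc ∫⁻ x, (gaussianPDF 0 v * fun x => ENNReal.ofReal (x ^ 2)) x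
      ≤ ∫⁻ x, ENNReal.ofReal (4 * Real.sqrt 2 * v) * gaussianPDF 0 (2 * v) x :=
        lintegral_mono hb
    _ = ENNReal.ofReal (4 * Real.sqrt 2 * v) * ∫⁻ x, gaussianPDF 0 (2 * v) x :=
        lintegral_const_mul _ (measurable_gaussianPDF _ _)
    _ = ENNReal.ofReal (4 * Real.sqrt 2 * v) := by
        rw [lintegral_gaussianPDF_eq_one 0 (by simp [hv])]
        simp

lemma gaussianReal_Icc_le (v : ℝ≥0) (hv : v ≠ 0) (c d : ℝ) :
    gaussianReal 0 v (Set.Icc c d) ≤ ENNReal.ofReal ((d - c) * (Real.sqrt (2 * Real.pi * v))⁻¹) := by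
  rcases le_or_gt c d with hcd | hcd
  · rw [gaussianReal_apply _ hv]
    calc ∫⁻ x in Set.Icc c d, gaussianPDF 0 v x
        ≤ ∫⁻ _ in Set.Icc c d, ENNReal.ofReal ((Real.sqrt (2 * Real.pi * v))⁻¹) := by
          apply lintegral_mono
          intro x
          apply ENNReal.ofReal_le_ofReal
          simp only [gaussianPDFReal, sub_zero]
          calc (Real.sqrt (2 * Real.pi * v))⁻¹ * Real.exp (-x ^ 2 / (2 * v))
              ≤ (Real.sqrt (2 * Real.pi * v))⁻¹ * 1 := by
                apply mul_le_mul_of_nonneg_left _ (by positivity)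
                rw [Real.exp_le_one_iff]
                have h0 : (0:ℝ) < v := by positivity
                have h1 : (0:ℝ) ≤ x ^ 2 / (2 * (v:ℝ)) := by positivity
                rw [neg_div] at *
                linarith
            _ = (Real.sqrt (2 * Real.pi * v))⁻¹ := mul_one _
      _ = ENNReal.ofReal ((Real.sqrt (2 * Real.pi * v))⁻¹) * volume (Set.Icc c d) := by
          rw [setLIntegral_const]
      _ ≤ ENNReal.ofReal ((d - c) * (Real.sqrt (2 * Real.pi * v))⁻¹) := by
          rw [Real.volume_Icc, ← ENNReal.ofReal_mul (by positivity), mul_comm]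
  · calc gaussianReal 0 v (Set.Icc c d) = 0 := by rw [Set.Icc_eq_empty hcd.not_ge]; simp
      _ ≤ _ := zero_le

lemma conv_abs_le {Ω : Type*} [MeasurableSpace Ω] (μ : Measure Ω) [IsProbabilityMeasure μ]
    (X W : Ω → ℝ) (hX : Measurable X) (hW : Measurable W)
    (hind : IndepFun W X μ) (v : ℝ≥0) (hv : v ≠ 0)
    (hlaw : Measure.map X μ = gaussianReal 0 v) (r : ℝ) :
    μ {ω | |X ω + W ω| ≤ r} ≤ ENNReal.ofReal (2 * r * (Real.sqrt (2 * Real.pi * v))⁻¹) := by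
  have hS : MeasurableSet {p : ℝ × ℝ | |p.2 + p.1| ≤ r} :=
    measurableSet_le ((continuous_snd.add continuous_fst).abs.measurable) measurable_const
  have hset : {ω | |X ω + W ω| ≤ r} = (fun ω => (W ω, X ω)) ⁻¹' {p : ℝ × ℝ | |p.2 + p.1| ≤ r} := by
    ext ω; simp
  rw [hset, ← Measure.map_apply (hW.prodMk hX) hS,
    (indepFun_iff_map_prod_eq_prod_map_map hW.aemeasurable hX.aemeasurable).mp hind,
    Measure.prod_apply hS]
  have hslice : ∀ y : ℝ, Prod.mk y ⁻¹' {p : ℝ × ℝ | |p.2 + p.1| ≤ r} = Set.Icc (-r - y) (r - y) := by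
    intro y
    ext x
    simp only [Set.mem_preimage, Set.mem_setOf_eq, Set.mem_Icc, abs_le]
    constructor <;> rintro ⟨h1, h2⟩ <;> constructor <;> linarith
  calc ∫⁻ y, Measure.map X μ (Prod.mk y ⁻¹' {p : ℝ × ℝ | |p.2 + p.1| ≤ r}) ∂(Measure.map W μ)
      ≤ ∫⁻ _, ENNReal.ofReal (2 * r * (Real.sqrt (2 * Real.pi * v))⁻¹) ∂(Measure.map W μ) := by
        apply lintegral_mono
        intro y
        simp only
        rw [hslice y, hlaw]
        have := gaussianReal_Icc_le v hv (-r - y) (r - y)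
        calc gaussianReal 0 v (Set.Icc (-r - y) (r - y))
            ≤ ENNReal.ofReal ((r - y - (-r - y)) * (Real.sqrt (2 * Real.pi * v))⁻¹) := this
          _ = ENNReal.ofReal (2 * r * (Real.sqrt (2 * Real.pi * v))⁻¹) := by ring_nf
    _ = ENNReal.ofReal (2 * r * (Real.sqrt (2 * Real.pi * v))⁻¹) := by
        have : IsProbabilityMeasure (Measure.map W μ) := Measure.isProbabilityMeasure_map hW.aemeasurable
        simp

lemma eventually_le_exp (C δ : ℝ) (hδ : 0 < δ) :
    ∃ N : ℕ, ∀ n : ℕ, N ≤ n → C * n ≤ Real.exp (δ * n) := by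
  have h := Real.tendsto_pow_mul_exp_neg_atTop_nhds_zero 1
  have hcomp : Filter.Tendsto (fun n : ℕ => (δ * n) ^ 1 * Real.exp (-(δ * n)))
      Filter.atTop (nhds 0) :=
    h.comp ((Filter.tendsto_const_mul_atTop_of_pos hδ).mpr tendsto_natCast_atTop_atTop)
  have h2 : Filter.Tendsto (fun n : ℕ => (C / δ) * ((δ * n) ^ 1 * Real.exp (-(δ * n))))
      Filter.atTop (nhds 0) := by
    simpa using hcomp.const_mul (C / δ)
  have h3 : ∀ᶠ n : ℕ in Filter.atTop,
      (C / δ) * ((δ * n) ^ 1 * Real.exp (-(δ * n))) < 1 := by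
    have := h2.eventually (eventually_lt_nhds (by norm_num : (0:ℝ) < 1))
    exact this
  obtain ⟨N, hN⟩ := Filter.eventually_atTop.mp h3
  refine ⟨N, fun n hn => ?_⟩
  have := hN n hn
  have hone : (C / δ) * ((δ * n) ^ 1 * Real.exp (-(δ * n))) = C * n * Real.exp (-(δ * n)) := by
    field_simp
  rw [hone] at this
  have hepos := Real.exp_pos (δ * n)
  have hrel : Real.exp (-(δ * n)) * Real.exp (δ * n) = 1 := by
    rw [← Real.exp_add]; simp
  nlinarith [this, hepos, hrel]

lemma U_formula {Ω : Type*} (a : ℝ) (Z : ℕ → Ω → ℝ) (U : ℕ → Ω → ℝ) (hU0 : U 0 = fun _ => 0)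
    (hU : ∀ i, U (i + 1) = fun ω => a * U i ω + Z (i + 1) ω) :
    ∀ k ω, U k ω = ∑ j ∈ Finset.Icc 1 k, a ^ (k - j) * Z j ω := by
  intro k
  induction k with
  | zero => intro ω; simp [hU0]
  | succ k ih =>
    intro ω
    rw [hU k]
    simp only
    rw [ih ω, Finset.mul_sum, ← Finset.insert_Icc_right_eq_Icc_add_one (by omega),
      Finset.sum_insert (by simp)]
    have h1 : a ^ (k + 1 - (k + 1)) * Z (k + 1) ω = Z (k + 1) ω := by simp
    rw [h1, add_comm]
    congr 1
    apply Finset.sum_congr rfl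
    intro j hj
    have hj' : j ≤ k := (Finset.mem_Icc.mp hj).2
    have h2 : k + 1 - j = (k - j) + 1 := by omega
    rw [h2, pow_succ]
    ring



set_option maxHeartbeats 1600000 in
theorem statement7
    {Ω : Type*} [MeasurableSpace Ω] (μ : Measure Ω) [IsProbabilityMeasure μ]
    (a σ : ℝ) (ha : 1 < a) (hσ : 0 < σ)
    (Z : ℕ → Ω → ℝ) (hZmeas : ∀ i, Measurable (Z i))
    (hZindep : iIndepFun Z μ)
    (hZlaw : ∀ i, Measure.map (Z i) μ = gaussianReal 0 ⟨σ ^ 2, sq_nonneg σ⟩)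
    (U : ℕ → Ω → ℝ) (hU0 : U 0 = fun _ => 0)
    (hU : ∀ i, U (i + 1) = fun ω => a * U i ω + Z (i + 1) ω) :
    ∃ c : ℝ, (1 / 2) * Real.log a ≤ c ∧ ∃ N : ℕ, ∀ n : ℕ, N ≤ n →
      (μ {ω | |aML U n ω - a| ≥ Real.sqrt (Real.log (Real.log n) / n)}).toReal
        ≤ 2 * Real.exp (-c * n) := by
  have ha0 : (0:ℝ) < a := lt_trans one_pos ha
  set t := Real.log a with htdef
  have ht : 0 < t := Real.log_pos ha
  have hat : a = Real.exp t := (Real.exp_log ha0).symm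
  set s : ℝ := Real.sqrt (2 * Real.pi) * σ with hsdef
  have hspos : 0 < s := by
    have : (0:ℝ) < Real.sqrt (2 * Real.pi) := Real.sqrt_pos.mpr (by positivity)
    positivity
  obtain ⟨N1, hN1⟩ := eventually_le_exp (4 * Real.sqrt 2 * σ ^ 2) (t / 4) (by positivity)
  obtain ⟨N2, hN2⟩ := eventually_le_exp (2 * Real.exp (2 * t) / s) (t / 8) (by positivity)
  obtain ⟨N3, hN3⟩ : ∃ N3 : ℕ, ∀ n : ℕ, N3 ≤ n → 1 ≤ Real.log (Real.log n) := by
    have htend : Filter.Tendsto (fun n : ℕ => Real.log (Real.log n)) Filter.atTop Filter.atTop :=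
      (Real.tendsto_log_atTop.comp Real.tendsto_log_atTop).comp tendsto_natCast_atTop_atTop
    exact Filter.eventually_atTop.mp (htend.eventually_ge_atTop 1)
  refine ⟨1 / 2 * t, le_refl _, max (max N1 N2) (max N3 2), fun n hn => ?_⟩
  have hn1 : N1 ≤ n := le_trans (le_trans (le_max_left _ _) (le_max_left _ _)) hn
  have hn2' : N2 ≤ n := le_trans (le_trans (le_max_right _ _) (le_max_left _ _)) hn
  have hn3 : N3 ≤ n := le_trans (le_trans (le_max_left _ _) (le_max_right _ _)) hn
  have hn2 : 2 ≤ n := le_trans (le_trans (le_max_right _ _) (le_max_right _ _)) hn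
  have hll : 1 ≤ Real.log (Real.log n) := hN3 n hn3
  have hn0 : 0 < n := by omega
  have hnpos : (0:ℝ) < n := by exact_mod_cast hn0
  set m := n - 1 with hmdef
  have hm1 : 1 ≤ m := by omega
  set ε := Real.sqrt (Real.log (Real.log n) / n) with hεdef
  have hεpos : 0 < ε := Real.sqrt_pos.mpr (by positivity)
  have hεsq : ε ^ 2 = Real.log (Real.log n) / n := Real.sq_sqrt (by positivity)
  set T := Real.exp (3 * t * n / 4) with hTdef
  set r := Real.exp (3 * t * n / 8) * Real.sqrt n with hrdef
  have hrpos : 0 < r := by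
    have : (0:ℝ) < Real.sqrt n := Real.sqrt_pos.mpr hnpos
    positivity
  have hr2 : r ^ 2 = T * n := by
    rw [hrdef, mul_pow, Real.sq_sqrt hnpos.le, pow_two, ← Real.exp_add, hTdef]
    congr 2
    ring
  set A := {ω : Ω | T ≤ ∑ i ∈ Finset.Icc 1 m, (Z (i + 1) ω) ^ 2} with hAdef
  set B := {ω : Ω | |U m ω| ≤ r} with hBdef
  have hsub : {ω : Ω | |aML U n ω - a| ≥ ε} ⊆ A ∪ B := by
    intro ω hω
    rw [Set.mem_union]
    by_contra hc
    push_neg at hc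
    obtain ⟨hcA, hcB⟩ := hc
    rw [hAdef, Set.mem_setOf_eq, not_le] at hcA
    rw [hBdef, Set.mem_setOf_eq, not_le] at hcB
    obtain ⟨D, hDdef⟩ : ∃ D : ℝ, D = ∑ i ∈ Finset.Icc 1 m, (U i ω) ^ 2 := ⟨_, rfl⟩
    obtain ⟨S, hSdef⟩ : ∃ S : ℝ, S = ∑ i ∈ Finset.Icc 1 m, U i ω * Z (i + 1) ω := ⟨_, rfl⟩
    obtain ⟨Q, hQdef⟩ : ∃ Q : ℝ, Q = ∑ i ∈ Finset.Icc 1 m, (Z (i + 1) ω) ^ 2 := ⟨_, rfl⟩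
    rw [← hQdef] at hcA
    have hDge : (U m ω) ^ 2 ≤ D := by
      rw [hDdef]
      apply Finset.single_le_sum (f := fun i => (U i ω) ^ 2) (fun i _ => sq_nonneg _)
        (Finset.mem_Icc.mpr ⟨hm1, le_refl m⟩)
    have hUm2 : r ^ 2 < (U m ω) ^ 2 := by
      have h1 := abs_nonneg (U m ω)
      nlinarith [hcB, hrpos, sq_abs (U m ω)]
    have hTpos : 0 < T := Real.exp_pos _
    have hDgt : T * n < D := by rw [← hr2]; linarith
    have hDpos : 0 < D := lt_trans (by positivity) hDgt
    have hnum : ∑ i ∈ Finset.Icc 1 m, U i ω * U (i + 1) ω = a * D + S := by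
      rw [hDdef, hSdef, Finset.mul_sum, ← Finset.sum_add_distrib]
      apply Finset.sum_congr rfl
      intro i _
      rw [hU i]
      ring
    have haml : aML U n ω - a = S / D := by
      rw [aML, ← hmdef, hnum, ← hDdef]
      field_simp
      ring
    have hQ0 : 0 ≤ Q := by
      rw [hQdef]; exact Finset.sum_nonneg fun i _ => sq_nonneg _
    have hCS : S ^ 2 ≤ D * Q := by
      rw [hDdef, hSdef, hQdef]
      exact Finset.sum_mul_sq_le_sq_mul_sq _ _ _
    have hsq : (S / D) ^ 2 < ε ^ 2 := by
      rw [div_pow]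
      have h1 : S ^ 2 / D ^ 2 ≤ Q / D := by
        rw [div_le_div_iff₀ (by positivity) hDpos]
        nlinarith [hCS, hDpos]
      have h2 : Q / D < T / (T * n) := by
        calc Q / D < T / D := by gcongr
          _ < T / (T * n) := div_lt_div_of_pos_left hTpos (by positivity) hDgt
      have h3 : T / (T * n) = 1 / n := by
        field_simp
      have h4 : 1 / (n:ℝ) ≤ ε ^ 2 := by
        rw [hεsq]
        gcongr
      linarith
    have habs : |S / D| < ε := by
      apply lt_of_pow_lt_pow_left₀ 2 hεpos.le
      rwa [sq_abs]
    rw [Set.mem_setOf_eq, ge_iff_le, haml] at hω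
    linarith
  have hσ2 : (0:ℝ) < σ ^ 2 := by positivity
  have hvσ : (⟨σ ^ 2, sq_nonneg σ⟩ : ℝ≥0) ≠ 0 := by
    intro h
    exact hσ2.ne' (congrArg Subtype.val h)
  have hTpos : 0 < T := Real.exp_pos _
  set eB := Real.exp (-(1 / 2 * t) * n) with heBdef
  have heBpos : 0 < eB := Real.exp_pos _
  have hμA : μ A ≤ ENNReal.ofReal eB := by
    obtain ⟨f, hfdef⟩ : ∃ f : Ω → ℝ≥0∞,
        f = fun ω => ∑ i ∈ Finset.Icc 1 m, ENNReal.ofReal ((Z (i + 1) ω) ^ 2) := ⟨_, rfl⟩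
    have hfm : AEMeasurable f μ := by
      rw [hfdef]
      exact (Finset.measurable_sum _ fun i _ =>
        ((hZmeas (i + 1)).pow_const 2).ennreal_ofReal).aemeasurable
    have hsubA : A ⊆ {ω | ENNReal.ofReal T ≤ f ω} := by
      intro ω hω
      rw [hAdef, Set.mem_setOf_eq] at hω
      rw [Set.mem_setOf_eq, hfdef]
      calc ENNReal.ofReal T ≤ ENNReal.ofReal (∑ i ∈ Finset.Icc 1 m, (Z (i + 1) ω) ^ 2) :=
            ENNReal.ofReal_le_ofReal hω
        _ = ∑ i ∈ Finset.Icc 1 m, ENNReal.ofReal ((Z (i + 1) ω) ^ 2) :=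
            ENNReal.ofReal_sum_of_nonneg (fun i _ => sq_nonneg _)
    have hlint : ∫⁻ ω, f ω ∂μ ≤ (m : ℝ≥0∞) * ENNReal.ofReal (4 * Real.sqrt 2 * σ ^ 2) := by
      rw [hfdef, lintegral_finset_sum _ (fun i _ => ((hZmeas (i + 1)).pow_const 2).ennreal_ofReal)]
      calc ∑ i ∈ Finset.Icc 1 m, ∫⁻ ω, ENNReal.ofReal ((Z (i + 1) ω) ^ 2) ∂μ
          ≤ ∑ _i ∈ Finset.Icc 1 m, ENNReal.ofReal (4 * Real.sqrt 2 * σ ^ 2) := by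
            apply Finset.sum_le_sum
            intro i _
            have hmap : ∫⁻ ω, ENNReal.ofReal ((Z (i + 1) ω) ^ 2) ∂μ
                = ∫⁻ x, ENNReal.ofReal (x ^ 2) ∂(gaussianReal 0 ⟨σ ^ 2, sq_nonneg σ⟩) := by
              rw [← hZlaw (i + 1), lintegral_map
                ((by fun_prop : Measurable fun x : ℝ => x ^ 2).ennreal_ofReal) (hZmeas (i + 1))]
            rw [hmap]
            exact lintegral_sq_gaussian_le ⟨σ ^ 2, sq_nonneg σ⟩ hvσ
        _ = (m : ℝ≥0∞) * ENNReal.ofReal (4 * Real.sqrt 2 * σ ^ 2) := by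
            rw [Finset.sum_const, Nat.card_Icc, Nat.add_sub_cancel, nsmul_eq_mul]
    have hmarkov := mul_meas_ge_le_lintegral₀ hfm (ENNReal.ofReal T)
    have hchain : ENNReal.ofReal T * μ A ≤ ENNReal.ofReal T * ENNReal.ofReal eB := by
      calc ENNReal.ofReal T * μ A ≤ ENNReal.ofReal T * μ {ω | ENNReal.ofReal T ≤ f ω} :=
            mul_le_mul_right (measure_mono hsubA) _
        _ ≤ ∫⁻ ω, f ω ∂μ := hmarkov
        _ ≤ (m : ℝ≥0∞) * ENNReal.ofReal (4 * Real.sqrt 2 * σ ^ 2) := hlint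
        _ ≤ ENNReal.ofReal (T * eB) := by
            rw [← ENNReal.ofReal_natCast m, ← ENNReal.ofReal_mul (by positivity)]
            apply ENNReal.ofReal_le_ofReal
            have hTe : T * eB = Real.exp (t / 4 * n) := by
              rw [hTdef, heBdef, ← Real.exp_add]
              congr 1
              ring
            rw [hTe]
            have h1 := hN1 n hn1
            have hmn : (m : ℝ) ≤ n := by exact_mod_cast Nat.sub_le n 1
            have hC : (0:ℝ) ≤ 4 * Real.sqrt 2 * σ ^ 2 := by positivity
            nlinarith [mul_le_mul_of_nonneg_right hmn hC, h1]
        _ = ENNReal.ofReal T * ENNReal.ofReal eB := ENNReal.ofReal_mul hTpos.le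
    have hT0 : ENNReal.ofReal T ≠ 0 := by
      simp only [ne_eq, ENNReal.ofReal_eq_zero, not_le]
      exact hTpos
    exact (ENNReal.mul_le_mul_iff_right hT0 ENNReal.ofReal_ne_top).mp hchain
  have hμB : μ B ≤ ENNReal.ofReal eB := by
    obtain ⟨k, hkdef⟩ : ∃ k, k = m - 1 := ⟨_, rfl⟩
    have hkn : k = n - 2 := by omega
    obtain ⟨X, hXdef⟩ : ∃ X : Ω → ℝ, X = fun ω => a ^ k * Z 1 ω := ⟨_, rfl⟩
    obtain ⟨W, hWdef⟩ : ∃ W : Ω → ℝ,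
        W = fun ω => ∑ j ∈ Finset.Icc 2 m, a ^ (m - j) * Z j ω := ⟨_, rfl⟩
    have hXmeas : Measurable X := by rw [hXdef]; exact (hZmeas 1).const_mul _
    have hWmeas : Measurable W := by
      rw [hWdef]
      exact Finset.measurable_sum _ fun j _ => (hZmeas j).const_mul _
    have hdecomp : ∀ ω, U m ω = X ω + W ω := by
      intro ω
      rw [U_formula a Z U hU0 hU m ω, hXdef, hWdef,
        ← Finset.insert_Icc_add_one_left_eq_Icc hm1, Finset.sum_insert (by simp), ← hkdef]
      rfl
    have hgind : iIndepFun
        (fun j => fun ω => a ^ (m - j) * Z j ω) μ :=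
      hZindep.comp (fun j (x : ℝ) => a ^ (m - j) * x) (fun j => measurable_const_mul _)
    have hindep : IndepFun W X μ := by
      have h1 : (1 : ℕ) ∉ Finset.Icc 2 m := by simp
      have h2 := hgind.indepFun_finsetSum_of_notMem
        (fun j => (hZmeas j).const_mul _) h1
      have hWeq : W = ∑ j ∈ Finset.Icc 2 m, (fun ω => a ^ (m - j) * Z j ω) := by
        rw [hWdef]
        funext ω
        simp [Finset.sum_apply]
      rw [hWeq, hXdef, hkdef]
      exact h2
    obtain ⟨vX, hvXdef⟩ : ∃ vX : ℝ≥0,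
        vX = (⟨(a ^ k) ^ 2, sq_nonneg _⟩ : ℝ≥0) * (⟨σ ^ 2, sq_nonneg σ⟩ : ℝ≥0) := ⟨_, rfl⟩
    have hvXcoe : (vX : ℝ) = (a ^ k) ^ 2 * σ ^ 2 := by rw [hvXdef]; rfl
    have hakpos : (0:ℝ) < a ^ k := pow_pos ha0 k
    have hvX0 : vX ≠ 0 := by
      intro h
      have : (vX : ℝ) = 0 := by rw [h]; simp
      rw [hvXcoe] at this
      have hpos := mul_pos (pow_pos hakpos 2) hσ2
      linarith
    have hXlaw : Measure.map X μ = gaussianReal 0 vX := by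
      rw [hXdef]
      have hcomp : (fun ω => a ^ k * Z 1 ω) = (fun x : ℝ => a ^ k * x) ∘ Z 1 := rfl
      rw [hcomp, ← Measure.map_map (measurable_const_mul _) (hZmeas 1), hZlaw 1]
      have hgm := gaussianReal_map_const_mul (μ := 0) (v := ⟨σ ^ 2, sq_nonneg σ⟩) (a ^ k)
      have : (fun x : ℝ => a ^ k * x) = (a ^ k * ·) := rfl
      rw [this, hgm, mul_zero, hvXdef]
      rfl
    have hconv := conv_abs_le μ X W hXmeas hWmeas hindep vX hvX0 hXlaw r
    have hBeq : B = {ω | |X ω + W ω| ≤ r} := by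
      rw [hBdef]
      ext ω
      simp [hdecomp ω]
    rw [hBeq]
    refine le_trans hconv (ENNReal.ofReal_le_ofReal ?_)
    rw [hvXcoe]
    have hsqrteq : Real.sqrt (2 * Real.pi * ((a ^ k) ^ 2 * σ ^ 2)) = s * a ^ k := by
      rw [show 2 * Real.pi * ((a ^ k) ^ 2 * σ ^ 2) = (s * a ^ k) ^ 2 by
        rw [hsdef, mul_pow, mul_pow, Real.sq_sqrt (by positivity)]
        ring]
      exact Real.sqrt_sq (by positivity)
    rw [hsqrteq]
    have hkcast : (k : ℝ) = (n : ℝ) - 2 := by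
      rw [hkn]
      push_cast [Nat.cast_sub hn2]
      ring
    have hak : a ^ k = Real.exp ((k : ℝ) * t) := by
      rw [hat, Real.exp_nat_mul]
    have hsqrtn : Real.sqrt n ≤ (n : ℝ) := by
      calc Real.sqrt n ≤ Real.sqrt ((n:ℝ) ^ 2) := Real.sqrt_le_sqrt (by nlinarith)
        _ = (n : ℝ) := Real.sqrt_sq hnpos.le
    have hh := hN2 n hn2'
    have hexp22 : Real.exp (2 * t) * Real.exp (-(2 * t)) = 1 := by
      rw [← Real.exp_add]
      simp
    have h2n : 2 * (n : ℝ) ≤ Real.exp (t / 8 * n) * (s * Real.exp (-(2 * t))) := by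
      have hid : 2 * (n : ℝ) = (2 * Real.exp (2 * t) / s * n) * (s * Real.exp (-(2 * t))) := by
        field_simp
        linear_combination (-1) * hexp22
      rw [hid]
      apply mul_le_mul_of_nonneg_right hh (by positivity)
    have hrw : 2 * r * (s * a ^ k)⁻¹ = (2 * r) / (s * a ^ k) := by
      rw [div_eq_mul_inv]
    rw [hrw, div_le_iff₀ (by positivity)]
    calc 2 * r = 2 * Real.sqrt n * Real.exp (3 * t * n / 8) := by rw [hrdef]; ring
      _ ≤ 2 * n * Real.exp (3 * t * n / 8) := by
          apply mul_le_mul_of_nonneg_right (by linarith) (Real.exp_pos _).le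
      _ ≤ (Real.exp (t / 8 * n) * (s * Real.exp (-(2 * t)))) * Real.exp (3 * t * n / 8) := by
          apply mul_le_mul_of_nonneg_right h2n (Real.exp_pos _).le
      _ = s * Real.exp (t / 8 * n + -(2 * t) + 3 * t * n / 8) := by
          rw [Real.exp_add, Real.exp_add]
          ring
      _ = s * Real.exp (-(1 / 2 * t) * n + ((n : ℝ) - 2) * t) := by
          rw [show t / 8 * (n:ℝ) + -(2 * t) + 3 * t * n / 8
              = -(1 / 2 * t) * n + ((n : ℝ) - 2) * t by ring]
      _ = eB * (s * a ^ k) := by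
          rw [heBdef, hak, hkcast, Real.exp_add]
          ring
  have hfinal : μ {ω | |aML U n ω - a| ≥ ε} ≤ ENNReal.ofReal (2 * eB) := by
    calc μ {ω | |aML U n ω - a| ≥ ε} ≤ μ (A ∪ B) := measure_mono hsub
      _ ≤ μ A + μ B := measure_union_le A B
      _ ≤ ENNReal.ofReal eB + ENNReal.ofReal eB := add_le_add hμA hμB
      _ = ENNReal.ofReal (2 * eB) := by
          rw [← ENNReal.ofReal_add heBpos.le heBpos.le]
          congr 1
          ring
  exact ENNReal.toReal_le_of_le_ofReal (by positivity) hfinal
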